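/- arXiv:2404.09766 — 2 statements merged into one kernel-verified Lean document; each statement's English description precedes it below -/
import Mathlib

section
/- Let A be a nonzero symmetric real m×m matrix. The space of vectors ξ ∈ ℝ^m satisfying A_{λμ} ξ_ν = A_{λν} ξ_μ for all indices λ, μ, ν has dimension 1 if rank A = 1, and dimension 0 if rank A ≥ 2. -/
/-- The space of solutions `ξ` of `A_{λμ} ξ_ν = A_{λν} ξ_μ`. -/
def solSpace {m : ℕ} (A : Matrix (Fin m) (Fin m) ℝ) : Submodule ℝ (Fin m → ℝ) where
  carrier := {ξ | ∀ l p q : Fin m, A l p * ξ q = A l q * ξ p}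
  zero_mem' := by intro l p q; simp
  add_mem' := by
    intro a b ha hb l p q
    simp only [Pi.add_apply, mul_add, ha l p q, hb l p q]
  smul_mem' := by
    intro c a ha l p q
    simp only [Pi.smul_apply, smul_eq_mul]
    rw [mul_left_comm, ha l p q, mul_left_comm]

/-- If `ξ ≠ 0` and `η` is pointwise proportional to `ξ`, then `η ∈ span {ξ}`. -/
lemma mem_span_of_prop {m : ℕ} {ξ η : Fin m → ℝ} (hξ : ξ ≠ 0)
    (h : ∀ p q, ξ p * η q = ξ q * η p) : η ∈ Submodule.span ℝ {ξ} := by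
  obtain ⟨q₀, hq₀⟩ : ∃ q₀, ξ q₀ ≠ 0 := by
    by_contra hc
    push_neg at hc
    exact hξ (funext fun i => hc i)
  rw [Submodule.mem_span_singleton]
  refine ⟨η q₀ / ξ q₀, funext fun p => ?_⟩
  have := h p q₀
  simp only [Pi.smul_apply, smul_eq_mul]
  field_simp
  linarith [h p q₀]

theorem stmt_3 (m : ℕ) (A : Matrix (Fin m) (Fin m) ℝ)
    (hA : A ≠ 0) (hsymm : A.IsSymm) :
    (A.rank = 1 → Module.finrank ℝ (solSpace A) = 1) ∧
    (2 ≤ A.rank → Module.finrank ℝ (solSpace A) = 0) := by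
  have hAT : A.transpose = A := hsymm
  have hrank : A.rank = Module.finrank ℝ (Submodule.span ℝ (Set.range A)) := by
    rw [Matrix.rank_eq_finrank_span_cols, Matrix.col, hAT]
  -- a nonzero row
  obtain ⟨l₀, hl₀⟩ : ∃ l₀, A l₀ ≠ 0 := by
    by_contra hc
    push_neg at hc
    exact hA (funext fun i => hc i)
  -- key: a nonzero solution forces all rows into span {ξ}
  have key : ∀ ξ ∈ solSpace A, ξ ≠ 0 → ∀ l, A l ∈ Submodule.span ℝ ({ξ} : Set (Fin m → ℝ)) := by
    intro ξ hξ hξ0 l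
    exact mem_span_of_prop hξ0 (fun p q => by
      have := hξ l q p
      linarith)
  constructor
  · intro h1
    -- span of rows has finrank 1, and contains the nonzero row A l₀
    have hsub : Submodule.span ℝ ({A l₀} : Set (Fin m → ℝ)) ≤ Submodule.span ℝ (Set.range A) :=
      Submodule.span_mono (Set.singleton_subset_iff.2 ⟨l₀, rfl⟩)
    have h1' : Module.finrank ℝ (Submodule.span ℝ ({A l₀} : Set (Fin m → ℝ))) = 1 :=
      finrank_span_singleton hl₀
    have heq : Submodule.span ℝ ({A l₀} : Set (Fin m → ℝ)) = Submodule.span ℝ (Set.range A) := by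
      apply Submodule.eq_of_le_of_finrank_le hsub
      rw [h1', ← hrank, h1]
    -- hence every row is a multiple of A l₀
    have hrow : ∀ l, ∃ c : ℝ, A l = c • A l₀ := by
      intro l
      have : A l ∈ Submodule.span ℝ ({A l₀} : Set (Fin m → ℝ)) := by
        rw [heq]; exact Submodule.subset_span ⟨l, rfl⟩
      obtain ⟨c, hc⟩ := Submodule.mem_span_singleton.1 this
      exact ⟨c, hc.symm⟩
    -- so A l₀ ∈ solSpace A
    have hmem : A l₀ ∈ solSpace A := by
      intro l p q
      obtain ⟨c, hc⟩ := hrow l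
      rw [hc]
      simp only [Pi.smul_apply, smul_eq_mul]
      ring
    -- and solSpace A = span {A l₀}
    have hsol : solSpace A = Submodule.span ℝ ({A l₀} : Set (Fin m → ℝ)) := by
      apply le_antisymm
      · intro η hη
        exact mem_span_of_prop hl₀ (fun p q => hη l₀ p q)
      · rw [Submodule.span_le, Set.singleton_subset_iff]
        exact hmem
    rw [hsol, h1']
  · intro h2
    have hsol : solSpace A = ⊥ := by
      rw [Submodule.eq_bot_iff]
      intro ξ hξ
      by_contra hξ0
      have hle : Submodule.span ℝ (Set.range A) ≤ Submodule.span ℝ ({ξ} : Set (Fin m → ℝ)) := by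
        rw [Submodule.span_le]
        rintro _ ⟨l, rfl⟩
        exact key ξ hξ hξ0 l
      have : A.rank ≤ 1 := by
        rw [hrank]
        calc Module.finrank ℝ (Submodule.span ℝ (Set.range A))
            ≤ Module.finrank ℝ (Submodule.span ℝ ({ξ} : Set (Fin m → ℝ))) :=
              Submodule.finrank_mono hle
          _ = 1 := finrank_span_singleton hξ0
      omega
    rw [hsol]
    exact finrank_bot ℝ _
end

section
/- With the notation of the previous setup (n ≥ 4, A a nonzero symmetric (n−2)×(n−2) matrix, ζ_λ = a_{λμ} dx^μ ∧ dx¹), the space of covectors ξ ∈ (ℝⁿ)* with ζ_λ ∧ ξ = 0 for all λ has dimension 1 if rank A ≥ 2, and dimension 2 if rank A = 1. In the first case it is spanned by dx¹. -/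
set_option synthInstance.maxHeartbeats 1000000
set_option maxHeartbeats 1000000


open ExteriorAlgebra

/-- The coordinate covector `dx^i` on `ℝⁿ`. -/
def dx {n : ℕ} (i : Fin n) : Module.Dual ℝ (Fin n → ℝ) := LinearMap.proj i

/-- Embedding of the middle indices `2,…,n-1` (0-based: `1,…,n-2`) into `Fin n`. -/
def mid {n : ℕ} (l : Fin (n - 2)) : Fin n := ⟨l.val + 1, by omega⟩

/-- The 2-form `ζ_λ = Σ_μ a_{λμ} dx^μ ∧ dx¹`. -/
noncomputable def zeta {n : ℕ} (A : Matrix (Fin (n - 2)) (Fin (n - 2)) ℝ) (hn : 4 ≤ n)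
    (l : Fin (n - 2)) : ExteriorAlgebra ℝ (Module.Dual ℝ (Fin n → ℝ)) :=
  ∑ p : Fin (n - 2), A l p • (ι ℝ (dx (mid p)) * ι ℝ (dx (⟨0, by omega⟩ : Fin n)))

/-- The space of covectors `ξ` with `ζ_λ ∧ ξ = 0` for all `λ`. -/
noncomputable def solD {n : ℕ} (A : Matrix (Fin (n - 2)) (Fin (n - 2)) ℝ) (hn : 4 ≤ n) :
    Submodule ℝ (Module.Dual ℝ (Fin n → ℝ)) where
  carrier := {ξ | ∀ l : Fin (n - 2), zeta A hn l * ι ℝ ξ = 0}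
  zero_mem' := by intro l; simp
  add_mem' := by
    intro a b ha hb l
    simp [map_add, mul_add, ha l, hb l]
  smul_mem' := by
    intro c a ha l
    simp [map_smul, mul_smul_comm, ha l]




/-- Alternating 3-form on the dual: evaluate at three fixed vectors and take det. -/
noncomputable def phi3 {n : ℕ} (v : Fin 3 → (Fin n → ℝ)) :
    (Module.Dual ℝ (Fin n → ℝ)) [⋀^Fin 3]→ₗ[ℝ] ℝ :=
  (Matrix.detRowAlternating).compLinearMap
    (LinearMap.pi fun j => LinearMap.applyₗ (v j) ∘ₗ LinearMap.id)

noncomputable def phiFam {n : ℕ} (v : Fin 3 → (Fin n → ℝ)) :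
    ∀ i, (Module.Dual ℝ (Fin n → ℝ)) [⋀^Fin i]→ₗ[ℝ] ℝ :=
  fun i => match i with
  | 3 => phi3 v
  | _ => 0

noncomputable def Phi {n : ℕ} (v : Fin 3 → (Fin n → ℝ)) :
    ExteriorAlgebra ℝ (Module.Dual ℝ (Fin n → ℝ)) →ₗ[ℝ] ℝ :=
  liftAlternating (phiFam v)

theorem Phi_apply {n : ℕ} (v : Fin 3 → (Fin n → ℝ)) (f g h : Module.Dual ℝ (Fin n → ℝ)) :
    Phi v (ι ℝ f * (ι ℝ g * ι ℝ h)) =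
      Matrix.det (Matrix.of fun i j => (![f, g, h] i) (v j)) := by
  have : ι ℝ f * (ι ℝ g * ι ℝ h) = ιMulti ℝ 3 ![f, g, h] := by
    rw [ιMulti_apply]
    simp [List.ofFn_succ]
  rw [this, Phi, liftAlternating_apply_ιMulti]
  rfl

/-- standard basis vector -/
def ee {n : ℕ} (i : Fin n) : Fin n → ℝ := Pi.single i 1

theorem dx_ee {n : ℕ} (i j : Fin n) : dx i (ee j) = if i = j then 1 else 0 := by
  simp [dx, ee, Pi.single_apply]

theorem Phi_zeta_mul {n : ℕ} (A : Matrix (Fin (n - 2)) (Fin (n - 2)) ℝ) (hn : 4 ≤ n)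
    (l : Fin (n - 2)) (ξ : Module.Dual ℝ (Fin n → ℝ)) (v : Fin 3 → (Fin n → ℝ)) :
    Phi v (zeta A hn l * ι ℝ ξ) =
      ∑ p : Fin (n - 2), A l p *
        Matrix.det (Matrix.of fun i j => (![dx (mid p), dx (⟨0, by omega⟩ : Fin n), ξ] i) (v j)) := by
  unfold zeta
  rw [Finset.sum_mul, map_sum]
  refine Finset.sum_congr rfl fun p _ => ?_
  rw [smul_mul_assoc, map_smul, mul_assoc, Phi_apply]
  simp

theorem mid_inj {n : ℕ} {p q : Fin (n - 2)} : mid p = mid q ↔ p = q := by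
  constructor
  · intro h; exact Fin.ext (by have := Fin.val_eq_val (mid p) (mid q) |>.2 h; simpa [mid] using this)
  · rintro rfl; rfl

theorem mid_ne_zero {n : ℕ} (hn : 4 ≤ n) (p : Fin (n - 2)) : mid p ≠ (⟨0, by omega⟩ : Fin n) := by
  simp [mid, Fin.ext_iff]

theorem mid_ne_last {n : ℕ} (hn : 4 ≤ n) (p : Fin (n - 2)) : mid p ≠ (⟨n - 1, by omega⟩ : Fin n) := by
  intro h
  have := p.isLt
  simp only [mid, Fin.ext_iff] at h
  omega

theorem zero_ne_last {n : ℕ} (hn : 4 ≤ n) :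
    (⟨0, by omega⟩ : Fin n) ≠ (⟨n - 1, by omega⟩ : Fin n) := by
  intro h
  simp only [Fin.ext_iff] at h
  omega

theorem Phi_last {n : ℕ} (A : Matrix (Fin (n - 2)) (Fin (n - 2)) ℝ) (hn : 4 ≤ n)
    (l : Fin (n - 2)) (ξ : Module.Dual ℝ (Fin n → ℝ)) (q : Fin (n - 2)) :
    Phi ![ee (mid q), ee (⟨0, by omega⟩ : Fin n), ee (⟨n - 1, by omega⟩ : Fin n)]
        (zeta A hn l * ι ℝ ξ) = A l q * ξ (ee (⟨n - 1, by omega⟩ : Fin n)) := by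
  rw [Phi_zeta_mul]
  have : ∀ p : Fin (n - 2), A l p *
        Matrix.det (Matrix.of fun i j => (![dx (mid p), dx (⟨0, by omega⟩ : Fin n), ξ] i)
          ((![ee (mid q), ee (⟨0, by omega⟩ : Fin n), ee (⟨n - 1, by omega⟩ : Fin n)]) j)) =
      (if p = q then A l p * ξ (ee (⟨n - 1, by omega⟩ : Fin n)) else 0) := by
    intro p
    rw [Matrix.det_fin_three]
    simp [dx_ee, mid_inj, mid_ne_zero hn, mid_ne_last hn, zero_ne_last hn]
  rw [Finset.sum_congr rfl fun p _ => this p]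
  simp

theorem Phi_cross {n : ℕ} (A : Matrix (Fin (n - 2)) (Fin (n - 2)) ℝ) (hn : 4 ≤ n)
    (l : Fin (n - 2)) (ξ : Module.Dual ℝ (Fin n → ℝ)) (q r : Fin (n - 2)) (hqr : q ≠ r) :
    Phi ![ee (mid q), ee (⟨0, by omega⟩ : Fin n), ee (mid r)]
        (zeta A hn l * ι ℝ ξ) = A l q * ξ (ee (mid r)) - A l r * ξ (ee (mid q)) := by
  rw [Phi_zeta_mul]
  have : ∀ p : Fin (n - 2), A l p *
        Matrix.det (Matrix.of fun i j => (![dx (mid p), dx (⟨0, by omega⟩ : Fin n), ξ] i)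
          ((![ee (mid q), ee (⟨0, by omega⟩ : Fin n), ee (mid r)]) j)) =
      (if p = q then A l p * ξ (ee (mid r)) else 0)
        - (if p = r then A l p * ξ (ee (mid q)) else 0) := by
    intro p
    rw [Matrix.det_fin_three]
    by_cases h1 : p = q <;> by_cases h2 : p = r <;>
      simp [h1, h2, dx_ee, mid_inj, mid_ne_zero hn, (mid_ne_zero hn _).symm, hqr,
        Ne.symm hqr]
  rw [Finset.sum_congr rfl fun p _ => this p]
  simp [Finset.sum_sub_distrib]

theorem sol_last_zero {n : ℕ} {A : Matrix (Fin (n - 2)) (Fin (n - 2)) ℝ} {hn : 4 ≤ n}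
    {ξ : Module.Dual ℝ (Fin n → ℝ)} (hξ : ξ ∈ solD A hn) (l q : Fin (n - 2)) :
    A l q * ξ (ee (⟨n - 1, by omega⟩ : Fin n)) = 0 := by
  have h := hξ l
  have := Phi_last A hn l ξ q
  rw [h, map_zero] at this
  linarith [this]

theorem sol_cross {n : ℕ} {A : Matrix (Fin (n - 2)) (Fin (n - 2)) ℝ} {hn : 4 ≤ n}
    {ξ : Module.Dual ℝ (Fin n → ℝ)} (hξ : ξ ∈ solD A hn) (l q r : Fin (n - 2)) :
    A l q * ξ (ee (mid r)) = A l r * ξ (ee (mid q)) := by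
  by_cases hqr : q = r
  · subst hqr; rfl
  · have h := hξ l
    have := Phi_cross A hn l ξ q r hqr
    rw [h, map_zero] at this
    linarith [this]

theorem ι_anticomm {n : ℕ} (x y : Module.Dual ℝ (Fin n → ℝ)) :
    ι ℝ x * ι ℝ y = -(ι ℝ y * ι ℝ x) := by
  have h := ι_sq_zero (R := ℝ) (x + y)
  rw [map_add, add_mul, mul_add, mul_add, ι_sq_zero, ι_sq_zero] at h
  have : ι ℝ x * ι ℝ y + ι ℝ y * ι ℝ x = 0 := by
    rw [← h]; abel
  linear_combination (norm := abel) this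

theorem dx0_mem_sol {n : ℕ} (A : Matrix (Fin (n - 2)) (Fin (n - 2)) ℝ) (hn : 4 ≤ n) :
    dx (⟨0, by omega⟩ : Fin n) ∈ solD A hn := by
  intro l
  unfold zeta
  rw [Finset.sum_mul]
  refine Finset.sum_eq_zero fun p _ => ?_
  rw [smul_mul_assoc, mul_assoc, ι_sq_zero, mul_zero, smul_zero]

theorem E_antisym {n : ℕ} (hn : 4 ≤ n) (p q : Fin (n - 2)) :
    ι ℝ (dx (mid p)) * ι ℝ (dx (⟨0, by omega⟩ : Fin n)) * ι ℝ (dx (mid q)) =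
      -(ι ℝ (dx (mid q)) * ι ℝ (dx (⟨0, by omega⟩ : Fin n)) * ι ℝ (dx (mid p))) := by
  set a := ι ℝ (dx (mid p) : Module.Dual ℝ (Fin n → ℝ))
  set b := ι ℝ (dx (⟨0, by omega⟩ : Fin n) : Module.Dual ℝ (Fin n → ℝ))
  set c := ι ℝ (dx (mid q) : Module.Dual ℝ (Fin n → ℝ))
  have hab : a * b = -(b * a) := ι_anticomm _ _
  have hac : a * c = -(c * a) := ι_anticomm _ _
  have hbc : b * c = -(c * b) := ι_anticomm _ _
  calc a * b * c = -(b * a) * c := by rw [hab]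
    _ = -(b * (a * c)) := by rw [neg_mul, mul_assoc]
    _ = b * (c * a) := by rw [hac]; simp
    _ = (b * c) * a := by rw [mul_assoc]
    _ = -(c * b) * a := by rw [hbc]
    _ = -(c * b * a) := by rw [neg_mul]

theorem S_zero {n : ℕ} (hn : 4 ≤ n) (w : Fin (n - 2) → ℝ) :
    (∑ p, ∑ q, (w p * w q) •
      (ι ℝ (dx (mid p)) * ι ℝ (dx (⟨0, by omega⟩ : Fin n)) * ι ℝ (dx (mid q)))
      : ExteriorAlgebra ℝ (Module.Dual ℝ (Fin n → ℝ))) = 0 := by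
  set S := (∑ p, ∑ q, (w p * w q) •
      (ι ℝ (dx (mid p)) * ι ℝ (dx (⟨0, by omega⟩ : Fin n)) * ι ℝ (dx (mid q)))
      : ExteriorAlgebra ℝ (Module.Dual ℝ (Fin n → ℝ))) with hSdef
  have hS : S = -S := by
    conv_lhs => rw [hSdef, Finset.sum_comm]
    rw [hSdef, ← Finset.sum_neg_distrib]
    refine Finset.sum_congr rfl fun q _ => ?_
    rw [← Finset.sum_neg_distrib]
    refine Finset.sum_congr rfl fun p _ => ?_
    rw [E_antisym hn, smul_neg, mul_comm]
  have h2 : S + S = 0 := by nth_rewrite 2 [hS]; simp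
  calc S = (2⁻¹ : ℝ) • ((2 : ℝ) • S) := by rw [smul_smul]; norm_num
    _ = (2⁻¹ : ℝ) • (S + S) := by rw [two_smul]
    _ = 0 := by rw [h2, smul_zero]

theorem xw_mem_sol {n : ℕ} (A : Matrix (Fin (n - 2)) (Fin (n - 2)) ℝ) (hn : 4 ≤ n)
    (w : Fin (n - 2) → ℝ) (hrow : ∀ l, ∃ t : ℝ, A l = t • w) :
    (∑ q, w q • dx (mid q) : Module.Dual ℝ (Fin n → ℝ)) ∈ solD A hn := by
  intro l
  obtain ⟨t, ht⟩ := hrow l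
  have hA : ∀ p, A l p = t * w p := fun p => by rw [ht]; rfl
  have expand : zeta A hn l * ι ℝ (∑ q, w q • dx (mid q) : Module.Dual ℝ (Fin n → ℝ)) =
      ∑ p, ∑ q, (A l p * w q) •
        (ι ℝ (dx (mid p)) * ι ℝ (dx (⟨0, by omega⟩ : Fin n)) * ι ℝ (dx (mid q))) := by
    unfold zeta
    rw [map_sum, Finset.sum_mul]
    refine Finset.sum_congr rfl fun p _ => ?_
    rw [Finset.mul_sum]
    refine Finset.sum_congr rfl fun q _ => ?_
    rw [map_smul, smul_mul_assoc, mul_smul_comm, smul_smul]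
  rw [expand]
  have : ∀ p q : Fin (n - 2), (A l p * w q) •
        (ι ℝ (dx (mid p)) * ι ℝ (dx (⟨0, by omega⟩ : Fin n)) * ι ℝ (dx (mid q))) =
      t • ((w p * w q) •
        (ι ℝ (dx (mid p)) * ι ℝ (dx (⟨0, by omega⟩ : Fin n)) * ι ℝ (dx (mid q)))) := by
    intro p q
    rw [smul_smul, hA p]
    ring_nf
  simp_rw [this, ← Finset.smul_sum]
  rw [S_zero hn w, smul_zero]

theorem dual_decomp {n : ℕ} (hn : 4 ≤ n) (ξ : Module.Dual ℝ (Fin n → ℝ)) :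
    ξ = ξ (ee (⟨0, by omega⟩ : Fin n)) • dx (⟨0, by omega⟩ : Fin n)
      + (∑ q, ξ (ee (mid q)) • dx (mid q))
      + ξ (ee (⟨n - 1, by omega⟩ : Fin n)) • dx (⟨n - 1, by omega⟩ : Fin n) := by
  refine Module.Basis.ext (Pi.basisFun ℝ (Fin n)) fun j => ?_
  have hb : (Pi.basisFun ℝ (Fin n)) j = ee j := by
    simp [ee, Pi.basisFun_apply]
  rw [hb]
  simp only [LinearMap.add_apply, LinearMap.smul_apply, LinearMap.coe_sum,
    Finset.sum_apply, dx_ee, smul_eq_mul]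
  rcases Nat.eq_zero_or_pos j.val with h0 | h0
  · have hj : j = (⟨0, by omega⟩ : Fin n) := Fin.ext (show j.val = 0 by omega)
    rw [hj]
    simp [mid_ne_zero hn, Ne.symm (zero_ne_last hn)]
  by_cases hl : j.val = n - 1
  · have hj : j = (⟨n - 1, by omega⟩ : Fin n) := Fin.ext (show j.val = n - 1 from hl)
    rw [hj]
    simp [mid_ne_last hn, zero_ne_last hn]
  · have hjn := j.isLt
    set q₀ : Fin (n - 2) := ⟨j.val - 1, by omega⟩ with hq₀
    have hj : mid q₀ = j := Fin.ext (by simp [mid, hq₀]; omega)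
    have h0' : (⟨0, by omega⟩ : Fin n) ≠ j := fun h => by
      rw [← h] at h0; simp at h0
    have hl' : (⟨n - 1, by omega⟩ : Fin n) ≠ j := fun h => hl (by rw [← h])
    rw [← hj]
    simp [h0', hl', mid_inj, Finset.sum_ite_eq', Ne.symm (mid_ne_zero hn q₀),
      Ne.symm (mid_ne_last hn q₀)]

theorem rank_rows {m : ℕ} (A : Matrix (Fin m) (Fin m) ℝ) :
    A.rank = Module.finrank ℝ (Submodule.span ℝ (Set.range A)) := by
  rw [← Matrix.rank_transpose, Matrix.rank_eq_finrank_span_cols]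
  rfl

theorem row_mem_span {m : ℕ} (A : Matrix (Fin m) (Fin m) ℝ) (l : Fin m) :
    A l ∈ Submodule.span ℝ (Set.range A) :=
  Submodule.subset_span ⟨l, rfl⟩

theorem exists_entry_ne_zero {m : ℕ} {A : Matrix (Fin m) (Fin m) ℝ} (hA : A ≠ 0) :
    ∃ l q, A l q ≠ 0 := by
  by_contra h
  push_neg at h
  exact hA (by ext l q; exact h l q)

theorem sol_eq_span_dx0 {n : ℕ} (hn : 4 ≤ n) {A : Matrix (Fin (n - 2)) (Fin (n - 2)) ℝ}
    (hA : A ≠ 0) (hr : 2 ≤ A.rank) :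
    solD A hn = Submodule.span ℝ {dx (⟨0, by omega⟩ : Fin n)} := by
  apply le_antisymm
  · intro ξ hξ
    obtain ⟨l₁, q₁, hA1⟩ := exists_entry_ne_zero hA
    have hlast : ξ (ee (⟨n - 1, by omega⟩ : Fin n)) = 0 := by
      rcases mul_eq_zero.mp (sol_last_zero hξ l₁ q₁) with h | h
      · exact absurd h hA1
      · exact h
    set c : Fin (n - 2) → ℝ := fun q => ξ (ee (mid q)) with hc
    have hmid : ∀ q, ξ (ee (mid q)) = 0 := by
      by_contra h
      push_neg at h
      obtain ⟨q₀, hq₀⟩ := h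
      have hcq₀ : c q₀ ≠ 0 := hq₀
      have hrow : ∀ l, A l = (A l q₀ / c q₀) • c := by
        intro l
        funext p
        have h1 : A l p * c q₀ = A l q₀ * c p := sol_cross hξ l p q₀
        have : ((A l q₀ / c q₀) • c) p = A l q₀ / c q₀ * c p := rfl
        rw [this, div_mul_eq_mul_div, eq_div_iff hcq₀]
        linarith [h1]
      have hsub : Set.range A ⊆ (Submodule.span ℝ {c} : Set _) := by
        rintro _ ⟨l, rfl⟩
        rw [hrow l]
        exact Submodule.smul_mem _ _ (Submodule.mem_span_singleton_self c)
      have hrank1 : A.rank ≤ 1 := by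
        rw [rank_rows]
        calc Module.finrank ℝ (Submodule.span ℝ (Set.range A))
            ≤ Module.finrank ℝ (Submodule.span ℝ {c}) :=
              Submodule.finrank_mono (Submodule.span_le.mpr hsub)
          _ = 1 := finrank_span_singleton (fun h => hcq₀ (by rw [h]; rfl))
      omega
    have hd := dual_decomp hn ξ
    rw [hlast, zero_smul, add_zero] at hd
    simp only [hmid, zero_smul, Finset.sum_const_zero, add_zero] at hd
    rw [hd]
    exact Submodule.mem_span_singleton.mpr ⟨_, rfl⟩
  · rw [Submodule.span_le, Set.singleton_subset_iff]
    exact dx0_mem_sol A hn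

theorem dx0_ne_zero {n : ℕ} (hn : 4 ≤ n) : dx (⟨0, by omega⟩ : Fin n) ≠ 0 := by
  intro h
  have : dx (⟨0, by omega⟩ : Fin n) (ee (⟨0, by omega⟩ : Fin n)) = 0 := by rw [h]; rfl
  rw [dx_ee, if_pos rfl] at this
  exact one_ne_zero this

theorem rank_one_rows {n : ℕ} {A : Matrix (Fin (n - 2)) (Fin (n - 2)) ℝ}
    (hr : A.rank = 1) (l₀ : Fin (n - 2)) (hw : A l₀ ≠ 0) :
    ∀ l, ∃ t : ℝ, A l = t • A l₀ := by
  have hle : Submodule.span ℝ {A l₀} ≤ Submodule.span ℝ (Set.range A) :=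
    Submodule.span_le.mpr (Set.singleton_subset_iff.mpr (row_mem_span A l₀))
  have hfr : Module.finrank ℝ (Submodule.span ℝ (Set.range A)) = 1 := by
    rw [← rank_rows]; exact hr
  have heq : Submodule.span ℝ ({A l₀} : Set (Fin (n - 2) → ℝ)) =
      Submodule.span ℝ (Set.range A) := by
    apply Submodule.eq_of_le_of_finrank_le hle
    rw [hfr, finrank_span_singleton hw]
  intro l
  have : A l ∈ Submodule.span ℝ ({A l₀} : Set (Fin (n - 2) → ℝ)) := by
    rw [heq]; exact row_mem_span A l
  obtain ⟨t, ht⟩ := Submodule.mem_span_singleton.mp this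
  exact ⟨t, ht.symm⟩

theorem rank_one_finrank {n : ℕ} (hn : 4 ≤ n) {A : Matrix (Fin (n - 2)) (Fin (n - 2)) ℝ}
    (hA : A ≠ 0) (hr : A.rank = 1) : Module.finrank ℝ (solD A hn) = 2 := by
  obtain ⟨l₀, q₀, hA0⟩ := exists_entry_ne_zero hA
  set w : Fin (n - 2) → ℝ := A l₀ with hwdef
  have hwne : w ≠ 0 := fun h => hA0 (by rw [← hwdef] at *; rw [h]; rfl)
  have hrow : ∀ l, ∃ t : ℝ, A l = t • w := rank_one_rows hr l₀ hwne
  set ξw : Module.Dual ℝ (Fin n → ℝ) := ∑ q, w q • dx (mid q) with hxw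
  have hmemw : ξw ∈ solD A hn := xw_mem_sol A hn w hrow
  have hxw_ee : ∀ j : Fin n, ξw (ee j) = ∑ q, w q * (if mid q = j then 1 else 0) := by
    intro j
    rw [hxw]
    simp only [LinearMap.coe_sum, Finset.sum_apply, LinearMap.smul_apply, dx_ee,
      smul_eq_mul]
  have heq : solD A hn = Submodule.span ℝ {dx (⟨0, by omega⟩ : Fin n), ξw} := by
    apply le_antisymm
    · intro ξ hξ
      have hlast : ξ (ee (⟨n - 1, by omega⟩ : Fin n)) = 0 := by
        rcases mul_eq_zero.mp (sol_last_zero hξ l₀ q₀) with h | h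
        · exact absurd h hA0
        · exact h
      set t : ℝ := ξ (ee (mid q₀)) / w q₀ with htdef
      have hmid : ∀ r, ξ (ee (mid r)) = t * w r := by
        intro r
        have h1 : w q₀ * ξ (ee (mid r)) = w r * ξ (ee (mid q₀)) := sol_cross hξ l₀ q₀ r
        rw [htdef, div_mul_eq_mul_div, eq_div_iff hA0]
        linarith [h1]
      have hd := dual_decomp hn ξ
      rw [hlast, zero_smul, add_zero] at hd
      refine Submodule.mem_span_pair.mpr ⟨ξ (ee (⟨0, by omega⟩ : Fin n)), t, ?_⟩
      conv_rhs => rw [hd]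
      congr 1
      rw [hxw, Finset.smul_sum]
      exact Finset.sum_congr rfl fun r _ => by rw [hmid r, smul_smul]
    · rw [Submodule.span_le, Set.insert_subset_iff, Set.singleton_subset_iff]
      exact ⟨dx0_mem_sol A hn, hmemw⟩
  have hli : LinearIndependent ℝ ![dx (⟨0, by omega⟩ : Fin n), ξw] := by
    rw [LinearIndependent.pair_iff]
    intro s u hst
    have h0 : s = 0 := by
      have := congrArg (fun f : Module.Dual ℝ (Fin n → ℝ) => f (ee (⟨0, by omega⟩ : Fin n))) hst
      simp only [LinearMap.add_apply, LinearMap.smul_apply, LinearMap.zero_apply,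
        smul_eq_mul, dx_ee, if_pos rfl, mul_one, hxw_ee] at this
      simpa [mid_ne_zero hn] using this
    have h1 : u = 0 := by
      have := congrArg (fun f : Module.Dual ℝ (Fin n → ℝ) => f (ee (mid q₀))) hst
      simp only [LinearMap.add_apply, LinearMap.smul_apply, LinearMap.zero_apply,
        smul_eq_mul, dx_ee, hxw_ee, mid_inj, Ne.symm (mid_ne_zero hn q₀),
        if_neg (Ne.symm (mid_ne_zero hn q₀)), mul_zero, zero_add, mul_ite, mul_one] at this
      rw [Finset.sum_ite_eq' Finset.univ q₀ w] at this
      simp at this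
      rcases this with h | h
      · exact h
      · exact absurd h hA0
    exact ⟨h0, h1⟩
  have hrange : Set.range ![dx (⟨0, by omega⟩ : Fin n), ξw] =
      ({dx (⟨0, by omega⟩ : Fin n), ξw} : Set (Module.Dual ℝ (Fin n → ℝ))) := by
    ext x
    simp [Fin.exists_fin_two, or_comm]
  rw [heq, ← hrange, finrank_span_eq_card hli]
  simp

theorem stmt_9 (n : ℕ) (hn : 4 ≤ n)
    (A : Matrix (Fin (n - 2)) (Fin (n - 2)) ℝ) (hA : A ≠ 0) (hsymm : A.IsSymm) :
    (2 ≤ A.rank →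
      Module.finrank ℝ (solD A hn) = 1 ∧
        solD A hn = Submodule.span ℝ {dx (⟨0, by omega⟩ : Fin n)}) ∧
    (A.rank = 1 → Module.finrank ℝ (solD A hn) = 2) := by
  constructor
  · intro hr
    have heq := sol_eq_span_dx0 hn hA hr
    exact ⟨by rw [heq]; exact finrank_span_singleton (dx0_ne_zero hn), heq⟩
  · intro hr
    exact rank_one_finrank hn hA hr
end
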